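/- arXiv:0903.3152 — 3 statements merged into one kernel-verified Lean document; each statement's English description precedes it below -/
import Mathlib

section
/- For the deformed H1 polynomial Q(u,x,y,z;α,β) = (u−z)(x−y) − (α−β)(1−ε·x·y), the biquadratic h₃₄ := Q·∂_y∂_z Q − (∂_y Q)(∂_z Q) (derivatives with respect to the third and fourth arguments) factorizes as h₃₄ = (β−α)·(1 − ε·x²); in particular it is independent of y and z and factors into an antisymmetric function of (α,β) times a polynomial in u,x depending only on α. -/
/-- The deformation of H1: Q(u,x,y,z;α,β) = (u−z)(x−y) − (α−β)(1−ε·x·y). -/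
def QH1 (ε u x y z α β : ℝ) : ℝ := (u - z) * (x - y) - (α - β) * (1 - ε * x * y)

lemma deriv_lin (a b s : ℝ) : deriv (fun t : ℝ => a + b * t) s = b := by
  rw [deriv_const_add, deriv_const_mul _ differentiableAt_fun_id]; simp

/-- The edge biquadratic h₃₄ = Q·Q_{,34} − Q_{,3}·Q_{,4} of deformed H1 factorizes as
(β−α)(1−εx²); in particular it is independent of y, z. -/
theorem stmt2 (ε u x y z α β : ℝ) :
    QH1 ε u x y z α β *
        deriv (fun z' => deriv (fun y' => QH1 ε u x y' z' α β) y) z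
      - deriv (fun y' => QH1 ε u x y' z α β) y *
        deriv (fun z' => QH1 ε u x y z' α β) z
      = (β - α) * (1 - ε * x ^ 2) := by
  have h1 : ∀ z', (fun y' => QH1 ε u x y' z' α β)
      = fun y' => ((u - z') * x - (α - β)) + (-(u - z') + (α - β) * (ε * x)) * y' := by
    intro z'; funext y'; simp [QH1]; ring
  have h2 : ∀ z', deriv (fun y' => QH1 ε u x y' z' α β) y
      = -(u - z') + (α - β) * (ε * x) := by
    intro z'; rw [h1 z', deriv_lin]
  have h3 : (fun z' => deriv (fun y' => QH1 ε u x y' z' α β) y)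
      = fun z' => (-u + (α - β) * (ε * x)) + 1 * z' := by
    funext z'; rw [h2 z']; ring
  have h4 : (fun z' => QH1 ε u x y z' α β)
      = fun z' => (u * (x - y) - (α - β) * (1 - ε * x * y)) + (-(x - y)) * z' := by
    funext z'; simp [QH1]; ring
  rw [h3, h4, h2, deriv_lin, deriv_lin, QH1]; ring
end

section
/- For the deformed H3 polynomial Q(u,x,y,z;α,β) = α(ux+yz) − β(uy+xz) + (α²−β²)(δ − ε·x·y/(αβ)), the edge biquadratic h₃₄ := Q·Q_{,34} − Q_{,3}Q_{,4} factorizes as h₃₄ = (α²−β²)·(u·x + δα − (ε/α)·x²) — i.e. as an antisymmetric function k(α,β)=α²−β² times a biquadratic f(u,x;α) independent of β. -/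
/-- The deformation of H3: Q(u,x,y,z;α,β) = α(ux+yz) − β(uy+xz) + (α²−β²)(δ − εxy/(αβ)). -/
noncomputable def QH3 (δ ε u x y z α β : ℝ) : ℝ :=
  α * (u * x + y * z) - β * (u * y + x * z) + (α ^ 2 - β ^ 2) * (δ - ε * x * y / (α * β))

lemma deriv_affine (a b : ℝ) (t : ℝ) : deriv (fun s : ℝ => a * s + b) t = a := by
  have : HasDerivAt (fun s : ℝ => a * s + b) a t := by
    simpa using ((hasDerivAt_id t).const_mul a).add_const b
  exact this.deriv

/-- The edge biquadratic h₃₄ = Q·Q_{,34} − Q_{,3}·Q_{,4} of deformed H3 factorizes as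
(α²−β²)·(ux + δα − (ε/α)x²): an antisymmetric k(α,β)=α²−β² times a biquadratic
f(u,x;α) independent of β. -/
theorem stmt8 (δ ε u x y z α β : ℝ) (hα : α ≠ 0) (hβ : β ≠ 0) :
    QH3 δ ε u x y z α β *
        deriv (fun z' => deriv (fun y' => QH3 δ ε u x y' z' α β) y) z
      - deriv (fun y' => QH3 δ ε u x y' z α β) y *
        deriv (fun z' => QH3 δ ε u x y z' α β) z
      = (α ^ 2 - β ^ 2) * (u * x + δ * α - (ε / α) * x ^ 2) := by
  have hy : ∀ z' : ℝ, deriv (fun y' => QH3 δ ε u x y' z' α β) y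
      = (α * z' - β * u - (α ^ 2 - β ^ 2) * ε * x / (α * β)) := by
    intro z'
    have : (fun y' => QH3 δ ε u x y' z' α β)
        = fun y' => (α * z' - β * u - (α ^ 2 - β ^ 2) * ε * x / (α * β)) * y'
            + (α * (u * x) - β * (x * z') + (α ^ 2 - β ^ 2) * δ) := by
      funext y'; unfold QH3; field_simp; ring
    rw [this, deriv_affine]
  have hz : deriv (fun z' => QH3 δ ε u x y z' α β) z = α * y - β * x := by
    have : (fun z' => QH3 δ ε u x y z' α β)
        = fun z' => (α * y - β * x) * z'
            + (α * (u * x) - β * (u * y) + (α ^ 2 - β ^ 2) * (δ - ε * x * y / (α * β))) := by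
      funext z'; unfold QH3; ring
    rw [this, deriv_affine]
  have hyz : deriv (fun z' => deriv (fun y' => QH3 δ ε u x y' z' α β) y) z = α := by
    have : (fun z' => deriv (fun y' => QH3 δ ε u x y' z' α β) y)
        = fun z' => α * z' + (-(β * u) - (α ^ 2 - β ^ 2) * ε * x / (α * β)) := by
      funext z'; rw [hy]; ring
    rw [this, deriv_affine]
  rw [hyz, hy, hz]
  unfold QH3
  field_simp
  ring
end

section
/- Inverse relation of successive Lax matrices for deformed H1: with M as above and the normalization L = M/√(k·f), the identity M(x₂,x₁;α;𝒴,𝒳)·M(x₁,x₂;α;𝒳,𝒴) = −k(α,λ)·f(x₁,x₂;α)·I₂ holds, where k(α,λ) = λ−α, f(x₁,x₂;α) = 1−ε(𝒴x₁²+𝒳x₂²), I₂ the 2×2 identity, and (𝒳,𝒴)∈{(0,1),(1,0)}. -/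
open Matrix

/-- The unnormalized Lax matrix M of deformed H1, with spectral parameter l,
lattice parameter a and coloring constants X, Y. -/
def LaxM (l ε x₁ x₂ a X Y : ℝ) : Matrix (Fin 2) (Fin 2) ℝ :=
  !![-x₂, -1; x₁ * x₂ - a + l, x₁] + (ε * (a - l)) • !![Y * x₁, 0; 0, -X * x₂]

/-- Inverse relation of successive Lax matrices for deformed H1:
M(x₂,x₁;α;𝒴,𝒳)·M(x₁,x₂;α;𝒳,𝒴) = −k(α,λ)·f(x₁,x₂;α)·I₂,
where k(α,λ) = λ−α and f(x₁,x₂;α) = 1 − ε(𝒴x₁² + 𝒳x₂²). -/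
theorem stmt16 (l ε x₁ x₂ α X Y : ℝ)
    (hXY : (X = 0 ∧ Y = 1) ∨ (X = 1 ∧ Y = 0)) :
    LaxM l ε x₂ x₁ α Y X * LaxM l ε x₁ x₂ α X Y
      = (-((l - α) * (1 - ε * (Y * x₁ ^ 2 + X * x₂ ^ 2)))) • (1 : Matrix (Fin 2) (Fin 2) ℝ) := by
  rcases hXY with ⟨hX, hY⟩ | ⟨hX, hY⟩ <;> subst hX hY <;>
    simp only [LaxM] <;> ext i j <;> fin_cases i <;> fin_cases j <;>
    simp [Matrix.mul_apply, Fin.sum_univ_two, Matrix.one_apply] <;> ring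
end
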